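/- Let H be a graph on vertex set [n] whose identity labelling has bandwidth at most βn, let σ: [n] → {0,…,r} be a proper (r+1)-colouring of H, let B_t be a block containing no vertex of colour 0, and let π be any permutation of [r]. Then there exists a proper (r+1)-colouring σ′ of H with σ′(v) = σ(v) for all v ∈ ⋃_{i<t} B_i and σ′(v) = π(σ(v)) for all v ∈ ⋃_{i>t} B_i. -/

import Mathlib

open Finset

namespace Paper

/-- The density `d(A,B) = e(A,B)/(|A||B|)` of a pair of vertex sets
(counting ordered pairs `(a,b) ∈ A × B` that are adjacent). -/
noncomputable def dens {V : Type*} (G : SimpleGraph V) (A B : Finset V) : ℝ :=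
  (Set.ncard {p : V × V | p.1 ∈ A ∧ p.2 ∈ B ∧ G.Adj p.1 p.2} : ℝ) /
    ((A.card : ℝ) * (B.card : ℝ))

/-- The pair `(A,B)` is `ε`-regular: `|d(A,B) − d(A′,B′)| ≤ ε` for all `A′ ⊆ A`, `B′ ⊆ B`
with `|A′| ≥ ε|A|` and `|B′| ≥ ε|B|`. -/
def EpsRegularPair {V : Type*} (G : SimpleGraph V) (ε : ℝ) (A B : Finset V) : Prop :=
  ∀ A' ⊆ A, ∀ B' ⊆ B,
    ε * (A.card : ℝ) ≤ (A'.card : ℝ) → ε * (B.card : ℝ) ≤ (B'.card : ℝ) →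
      |dens G A' B' - dens G A B| ≤ ε

/-- `(ε,δ)`-regular pair: `ε`-regular with density at least `δ`. -/
def RegularPair {V : Type*} (G : SimpleGraph V) (ε δ : ℝ) (A B : Finset V) : Prop :=
  EpsRegularPair G ε A B ∧ δ ≤ dens G A B

/-- `(ε,δ)`-super-regular pair: `ε`-regular and every vertex of `A` has at least `δ|B|`
neighbours in `B` and vice versa. -/
def SuperRegularPair {V : Type*} (G : SimpleGraph V) (ε δ : ℝ) (A B : Finset V) : Prop :=
  EpsRegularPair G ε A B ∧
    (∀ v ∈ A, δ * (B.card : ℝ) ≤ (Set.ncard {u : V | u ∈ B ∧ G.Adj v u} : ℝ)) ∧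
    (∀ v ∈ B, δ * (A.card : ℝ) ≤ (Set.ncard {u : V | u ∈ A ∧ G.Adj v u} : ℝ))

/-- A family of vertex sets is `(ε,δ)`-regular on a reduced graph `R`. -/
def RegularOn {V ι : Type*} (G : SimpleGraph V) (ε δ : ℝ) (R : SimpleGraph ι)
    (P : ι → Finset V) : Prop :=
  ∀ i j, R.Adj i j → RegularPair G ε δ (P i) (P j)

/-- A family of vertex sets is `(ε,δ)`-super-regular on a reduced graph `R`. -/
def SuperRegularOn {V ι : Type*} (G : SimpleGraph V) (ε δ : ℝ) (R : SimpleGraph ι)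
    (P : ι → Finset V) : Prop :=
  ∀ i j, R.Adj i j → SuperRegularPair G ε δ (P i) (P j)

/-- `P` is a partition of the whole vertex set. -/
def IsPartitionOn {V ι : Type*} (P : ι → Finset V) : Prop :=
  (∀ i j, i ≠ j → Disjoint (P i) (P j)) ∧ ∀ v : V, ∃ i, v ∈ P i

/-- `G` contains a copy of `H`: there is an injective graph homomorphism `H → G`. -/
def ContainsCopy {V W : Type*} (G : SimpleGraph V) (H : SimpleGraph W) : Prop :=
  ∃ f : W → V, Function.Injective f ∧ ∀ u v, H.Adj u v → G.Adj (f u) (f v)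

/-- `H` has bandwidth at most `b`: there is a labelling of the vertices by `1,…,n`
(equivalently by `Fin n`) such that the labels of adjacent vertices differ by at most `b`. -/
def BandwidthLE {V : Type*} [Fintype V] (H : SimpleGraph V) (b : ℝ) : Prop :=
  ∃ φ : V ≃ Fin (Fintype.card V),
    ∀ u v, H.Adj u v → |((φ u : ℕ) : ℝ) - ((φ v : ℕ) : ℝ)| ≤ b

/-- `H` is `a`-arrangeable: there is an ordering `φ` of the vertices such that for every
vertex `x`, the left-neighbourhood of the right-neighbourhood of `x` has size at most `a`. -/
def Arrangeable {V : Type*} [Fintype V] (H : SimpleGraph V) (a : ℕ) : Prop :=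
  ∃ φ : V ≃ Fin (Fintype.card V), ∀ x : V,
    Set.ncard {u : V | φ u ≤ φ x ∧ ∃ w : V, H.Adj x w ∧ φ x < φ w ∧ H.Adj w u} ≤ a

/-- Maximum degree at most `D`. -/
def MaxDegreeLE {V : Type*} (H : SimpleGraph V) (D : ℝ) : Prop :=
  ∀ v : V, ((H.neighborSet v).ncard : ℝ) ≤ D

/-- Minimum degree at least `D`. -/
def MinDegreeGE {V : Type*} (G : SimpleGraph V) (D : ℝ) : Prop :=
  ∀ v : V, D ≤ ((G.neighborSet v).ncard : ℝ)

/-- `K_k^r`: the disjoint union of `k` complete graphs on `r` vertices,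
on vertex set `[k] × [r]`. -/
def graphK (k r : ℕ) : SimpleGraph (Fin k × Fin r) :=
  SimpleGraph.fromRel fun p q => p.1 = q.1 ∧ p.2 ≠ q.2

/-- `B_k^r`: `(i,j)` and `(i',j')` are adjacent iff `|i − i'| ≤ 1` and `j ≠ j'`. -/
def graphB (k r : ℕ) : SimpleGraph (Fin k × Fin r) :=
  SimpleGraph.fromRel fun p q => ((p.1 : ℤ) - (q.1 : ℤ)).natAbs ≤ 1 ∧ p.2 ≠ q.2

/-- `C_m^r`: the `r`-th power of the cycle on `m` vertices. -/
def cyclePower (m r : ℕ) : SimpleGraph (Fin m) :=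
  SimpleGraph.fromRel fun u v =>
    min (((u : ℤ) - (v : ℤ)).natAbs) (m - ((u : ℤ) - (v : ℤ)).natAbs) ≤ r

/-- `(m i j)` is an `r`-equitable integer partition of `n`. -/
def EquitablePartition (n k r : ℕ) (m : Fin k → Fin r → ℕ) : Prop :=
  (∑ i, ∑ j, m i j) = n ∧ ∀ i j j', m i j ≤ m i j' + 1

/-- The two-colour Ramsey number of `H` is at most `N`: every red/blue colouring of the
edges of `K_N` (coded by the graph of red edges) contains a monochromatic copy of `H`. -/
def RamseyPropLE {W : Type*} (H : SimpleGraph W) (N : ℕ) : Prop :=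
  ∀ Gr : SimpleGraph (Fin N), ContainsCopy Gr H ∨ ContainsCopy Grᶜ H

/-- The vertex labelled `v` (with 1-based label `v+1`) lies in the block
`B_t = {(t−1)4rβn + 1, …, t·4rβn}`. -/
def InBlock (r : ℕ) (β : ℝ) (n : ℕ) (t : ℕ) (v : Fin n) : Prop :=
  ((t : ℝ) - 1) * (4 * r * β * n) < ((v : ℕ) : ℝ) + 1 ∧
    ((v : ℕ) : ℝ) + 1 ≤ (t : ℝ) * (4 * r * β * n)

/-- The block `B_t` contains a vertex of colour `0`. -/
def BlockHasZero (r : ℕ) (β : ℝ) (n : ℕ) (σ : Fin n → ℕ) (t : ℕ) : Prop :=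
  ∃ v : Fin n, InBlock r β n t v ∧ σ v = 0

/-- `σ` is `(ℓ,β)`-zero free: among any `ℓ` consecutive blocks at most one block
contains a vertex of colour `0`. -/
def ZeroFree (ℓ : ℝ) (r : ℕ) (β : ℝ) (n : ℕ) (σ : Fin n → ℕ) : Prop :=
  ∀ t₀ t t' : ℕ, t₀ ≤ t → t₀ ≤ t' → (t : ℝ) < (t₀ : ℝ) + ℓ → (t' : ℝ) < (t₀ : ℝ) + ℓ →
    BlockHasZero r β n σ t → BlockHasZero r β n σ t' → t = t'

/-- A proper `(r+1)`-colouring with colours `{0,…,r}`. -/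
def ProperColoring {n : ℕ} (H : SimpleGraph (Fin n)) (r : ℕ) (σ : Fin n → ℕ) : Prop :=
  (∀ v, σ v ≤ r) ∧ ∀ u v, H.Adj u v → σ u ≠ σ v

/-- `σ : [n] → {0,…,r}` is `x`-balanced. -/
def BalancedColoring (r n : ℕ) (x : ℝ) (σ : Fin n → ℕ) : Prop :=
  (∀ a b : ℕ, a ≤ b → b ≤ n → ∀ c : ℕ, 1 ≤ c → c ≤ r →
    ((b : ℝ) - (a : ℝ)) / r - x ≤
        (Set.ncard {v : Fin n | σ v = c ∧ a ≤ (v : ℕ) ∧ (v : ℕ) < b} : ℝ) ∧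
      (Set.ncard {v : Fin n | σ v = c ∧ a ≤ (v : ℕ) ∧ (v : ℕ) < b} : ℝ) ≤
        ((b : ℝ) - (a : ℝ)) / r + x) ∧
  (Set.ncard {v : Fin n | σ v = 0} : ℝ) ≤ x

/-- The red part of the coloured reduced graph: `ij` is an edge iff `(Vᵢ,Vⱼ)` is a coloured
`ε`-regular pair whose majority colour is red (red density at least `1/2`). -/
def reducedRed {n k : ℕ} (Gred : SimpleGraph (Fin n)) (ε : ℝ) (P : Fin k → Finset (Fin n)) :
    SimpleGraph (Fin k) :=
  SimpleGraph.fromRel fun i j =>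
    EpsRegularPair Gred ε (P i) (P j) ∧ (1 / 2 : ℝ) ≤ dens Gred (P i) (P j)

/-- The blue part of the coloured reduced graph. -/
def reducedBlue {n k : ℕ} (Gred : SimpleGraph (Fin n)) (ε : ℝ) (P : Fin k → Finset (Fin n)) :
    SimpleGraph (Fin k) :=
  SimpleGraph.fromRel fun i j =>
    EpsRegularPair Gred ε (P i) (P j) ∧ dens Gred (P i) (P j) < (1 / 2 : ℝ)

private lemma star_decomp_aux (r : ℕ) : ∀ k : ℕ, ∀ g : Equiv.Perm (Fin (r+1)),
    ((Finset.univ.filter (fun a : Fin (r+1) => a ≠ 0 ∧ g a ≠ a)).card ≤ k) →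
    ∃ l : List (Equiv.Perm (Fin (r+1))), l.prod = g ∧ l.length ≤ 2*k ∧
      ∀ p ∈ l, ∃ c, p = Equiv.swap 0 c := by
  intro k
  induction k with
  | zero =>
    intro g hg
    have hfix : ∀ a : Fin (r+1), a ≠ 0 → g a = a := by
      intro a ha
      by_contra h
      have hmem : a ∈ Finset.univ.filter (fun a : Fin (r+1) => a ≠ 0 ∧ g a ≠ a) := by
        simp [ha, h]
      have := Finset.card_pos.mpr ⟨a, hmem⟩
      omega
    have hg0 : g 0 = 0 := by
      by_contra h
      exact h (g.injective (hfix (g 0) h))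
    refine ⟨[], ?_, by simp, by simp⟩
    simp only [List.prod_nil]
    ext a
    by_cases ha : a = 0
    · simp [ha, hg0]
    · simp [hfix a ha]
  | succ k ih =>
    intro g hg
    by_cases hk : (Finset.univ.filter (fun a : Fin (r+1) => a ≠ 0 ∧ g a ≠ a)).card ≤ k
    · obtain ⟨l, h1, h2, h3⟩ := ih g hk
      exact ⟨l, h1, by omega, h3⟩
    · have hpos : 0 < (Finset.univ.filter (fun a : Fin (r+1) => a ≠ 0 ∧ g a ≠ a)).card := by
        omega
      obtain ⟨a, ha⟩ := Finset.card_pos.mp hpos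
      simp only [Finset.mem_filter, Finset.mem_univ, true_and] at ha
      obtain ⟨ha0, hga⟩ := ha
      set g' : Equiv.Perm (Fin (r+1)) := Equiv.swap 0 a * Equiv.swap 0 (g a) * g with hg'
      have hg'a : g' a = a := by
        simp [hg', Equiv.Perm.mul_apply]
      have hsub : (Finset.univ.filter (fun x : Fin (r+1) => x ≠ 0 ∧ g' x ≠ x)) ⊆
          (Finset.univ.filter (fun x : Fin (r+1) => x ≠ 0 ∧ g x ≠ x)).erase a := by
        intro x hx
        simp only [Finset.mem_filter, Finset.mem_univ, true_and] at hx
        obtain ⟨hx0, hx'⟩ := hx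
        have hxa : x ≠ a := fun h => hx' (h ▸ hg'a)
        have hgx : g x ≠ x := by
          intro h
          apply hx'
          have h1 : x ≠ g a := by
            intro he
            exact hga (g.injective (by rw [← he, h]))
          simp [hg', Equiv.Perm.mul_apply, h,
            Equiv.swap_apply_of_ne_of_ne hx0 h1, Equiv.swap_apply_of_ne_of_ne hx0 hxa]
        exact Finset.mem_erase.mpr ⟨hxa, by simp [hx0, hgx]⟩
      have hcard : (Finset.univ.filter (fun x : Fin (r+1) => x ≠ 0 ∧ g' x ≠ x)).card ≤ k := by
        have h1 := Finset.card_le_card hsub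
        have h2 := Finset.card_erase_le (a := a)
          (s := Finset.univ.filter (fun x : Fin (r+1) => x ≠ 0 ∧ g x ≠ x))
        have h3 : ((Finset.univ.filter (fun x : Fin (r+1) => x ≠ 0 ∧ g x ≠ x)).erase a).card
            = (Finset.univ.filter (fun x : Fin (r+1) => x ≠ 0 ∧ g x ≠ x)).card - 1 := by
          apply Finset.card_erase_of_mem
          simp [ha0, hga]
        omega
      obtain ⟨l', hl1, hl2, hl3⟩ := ih g' hcard
      refine ⟨Equiv.swap 0 (g a) :: Equiv.swap 0 a :: l', ?_, by simp; omega, ?_⟩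
      · simp only [List.prod_cons, hl1, hg']
        simp [← mul_assoc, Equiv.swap_mul_self, one_mul]
      · intro p hp
        rw [List.mem_cons, List.mem_cons] at hp
        rcases hp with h | h | h
        · exact ⟨g a, by rw [h]⟩
        · exact ⟨a, by rw [h]⟩
        · exact hl3 p h

private lemma star_decomp (r : ℕ) (g : Equiv.Perm (Fin (r+1))) :
    ∃ l : List (Equiv.Perm (Fin (r+1))), l.prod = g ∧ l.length ≤ 2*r ∧
      ∀ p ∈ l, ∃ c, p = Equiv.swap 0 c := by
  apply star_decomp_aux r r g
  have hsub : (Finset.univ.filter (fun a : Fin (r+1) => a ≠ 0 ∧ g a ≠ a)) ⊆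
      Finset.univ.erase (0 : Fin (r+1)) := by
    intro a ha
    simp only [Finset.mem_filter] at ha
    exact Finset.mem_erase.mpr ⟨ha.2.1, Finset.mem_univ a⟩
  have := Finset.card_le_card hsub
  have h2 : (Finset.univ.erase (0 : Fin (r+1))).card = r := by
    rw [Finset.card_erase_of_mem (Finset.mem_univ _), Finset.card_univ, Fintype.card_fin]
    omega
  omega

/-- number of thresholds `L + (s+1)w`, `s < len`, strictly below `x`. -/
private noncomputable def blkCnt (L w x : ℝ) (len : ℕ) : ℕ :=
  ((Finset.range len).filter (fun s : ℕ => L + ((s:ℝ)+1)*w < x)).card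

private lemma blkCnt_le (L w x : ℝ) (len : ℕ) : blkCnt L w x len ≤ len :=
  le_trans (Finset.card_filter_le _ _) (le_of_eq (Finset.card_range len))

private lemma blkCnt_mono (L w : ℝ) (len : ℕ) {x y : ℝ} (h : x ≤ y) :
    blkCnt L w x len ≤ blkCnt L w y len := by
  apply Finset.card_le_card
  intro s hs
  simp only [Finset.mem_filter, Finset.mem_range] at hs ⊢
  exact ⟨hs.1, lt_of_lt_of_le hs.2 h⟩

private lemma blkCnt_eq_zero (L w x : ℝ) (len : ℕ) (hw : 0 ≤ w) (h : x ≤ L + w) :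
    blkCnt L w x len = 0 := by
  rw [blkCnt, Finset.card_eq_zero, Finset.filter_eq_empty_iff]
  intro s _
  push_neg
  have : (0:ℝ) ≤ (s:ℝ) := Nat.cast_nonneg s
  nlinarith

private lemma blkCnt_eq_len (L w x : ℝ) (len : ℕ)
    (h : ∀ s : ℕ, s < len → L + ((s:ℝ)+1)*w < x) : blkCnt L w x len = len := by
  rw [blkCnt, Finset.filter_true_of_mem, Finset.card_range]
  intro s hs
  exact h s (Finset.mem_range.mp hs)

private lemma blk_cross (L w x y : ℝ) (len : ℕ) (hw : 0 < w) (hxy : x ≤ y) (hyx : y ≤ x + w)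
    (hlt : blkCnt L w x len < blkCnt L w y len) :
    ∃ s : ℕ, s < len ∧ x ≤ L + ((s:ℝ)+1)*w ∧ L + ((s:ℝ)+1)*w < y ∧
      blkCnt L w y len = blkCnt L w x len + 1 := by
  set Sx := (Finset.range len).filter (fun s : ℕ => L + ((s:ℝ)+1)*w < x) with hSx
  set Sy := (Finset.range len).filter (fun s : ℕ => L + ((s:ℝ)+1)*w < y) with hSy
  have hsub : Sx ⊆ Sy := by
    intro s hs
    simp only [hSx, hSy, Finset.mem_filter, Finset.mem_range] at hs ⊢
    exact ⟨hs.1, lt_of_lt_of_le hs.2 hxy⟩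
  obtain ⟨s, hsy, hsx⟩ : ∃ s, s ∈ Sy ∧ s ∉ Sx := by
    by_contra hc
    push_neg at hc
    exact absurd (Finset.card_le_card fun s hs => hc s hs) (not_le.mpr hlt)
  have hkey : ∀ s' : ℕ, s' ∈ Sy → s' ∉ Sx → s' = s := by
    intro s' hs'y hs'x
    by_contra hne
    simp only [hSx, hSy, Finset.mem_filter, Finset.mem_range, not_and, not_lt] at hsy hsx hs'y hs'x
    have h1 : x ≤ L + ((s:ℝ)+1)*w := hsx hsy.1
    have h2 : x ≤ L + ((s':ℝ)+1)*w := hs'x hs'y.1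
    rcases lt_or_gt_of_ne hne with h | h
    · have hc : (s':ℝ) + 1 ≤ (s:ℝ) := by exact_mod_cast Nat.succ_le_of_lt h
      nlinarith [hsy.2]
    · have hc : (s:ℝ) + 1 ≤ (s':ℝ) := by exact_mod_cast Nat.succ_le_of_lt h
      nlinarith [hs'y.2]
  have hins : Sy ⊆ insert s Sx := by
    intro s' hs'
    by_cases h' : s' ∈ Sx
    · exact Finset.mem_insert_of_mem h'
    · exact Finset.mem_insert.mpr (Or.inl (hkey s' hs' h'))
  have hle : Sy.card ≤ Sx.card + 1 :=
    le_trans (Finset.card_le_card hins) (Finset.card_insert_le _ _)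
  simp only [hSx, hSy, Finset.mem_filter, Finset.mem_range, not_and, not_lt] at hsy hsx
  refine ⟨s, hsy.1, hsx hsy.1, hsy.2, ?_⟩
  have h1 : blkCnt L w x len = Sx.card := rfl
  have h2 : blkCnt L w y len = Sy.card := rfl
  omega


set_option maxHeartbeats 1000000 in
/-- recolouring beyond a zero free block by a permutation of the colours.
The vertex set of `H` is `Fin n`, vertex `v` carries the 1-based label `v + 1`;
`π` is a permutation of `{1,…,r}` (a permutation of `ℕ` fixing `0` and preserving `[r]`). -/
theorem recolour (n r : ℕ) (β : ℝ) (H : SimpleGraph (Fin n))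
    (hbw : ∀ u v : Fin n, H.Adj u v → |((u : ℕ) : ℝ) - ((v : ℕ) : ℝ)| ≤ β * n)
    (σ : Fin n → ℕ) (hσ : ProperColoring H r σ)
    (t : ℕ) (hzf : ¬ BlockHasZero r β n σ t)
    (π : Equiv.Perm ℕ) (hπ0 : π 0 = 0) (hπ : ∀ c : ℕ, 1 ≤ c → c ≤ r → 1 ≤ π c ∧ π c ≤ r) :
    ∃ σ' : Fin n → ℕ, ProperColoring H r σ' ∧
      (∀ v : Fin n, ∀ i : ℕ, i < t → InBlock r β n i v → σ' v = σ v) ∧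
      (∀ v : Fin n, ∀ i : ℕ, t < i → InBlock r β n i v → σ' v = π (σ v)) := by
  classical
  by_cases hW : (0:ℝ) < 4*r*β*n
  swap
  · -- degenerate case: all blocks are empty
    refine ⟨σ, hσ, fun v i _ _ => rfl, fun v i hti hib => ?_⟩
    exfalso
    obtain ⟨h1, h2⟩ := hib
    have hW' : 4*(r:ℝ)*β*n ≤ 0 := le_of_not_gt hW
    have hi : (0:ℝ) ≤ (i:ℝ) := Nat.cast_nonneg i
    have hprod : (i:ℝ) * (4*r*β*n) ≤ 0 := mul_nonpos_of_nonneg_of_nonpos hi hW'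
    have hv : (0:ℝ) ≤ ((v:ℕ):ℝ) := Nat.cast_nonneg _
    linarith
  · -- main case
    have hr : 1 ≤ r := by
      rcases Nat.eq_zero_or_pos r with h | h
      · subst h; norm_num at hW
      · exact h
    have hrR : (1:ℝ) ≤ (r:ℝ) := by exact_mod_cast hr
    have hw : 0 < β * n := by nlinarith
    set w : ℝ := β * n with hwdef
    have hcol : ∀ v, σ v < r + 1 := fun v => Nat.lt_succ_of_le (hσ.1 v)
    -- the permutation of Fin (r+1) induced by π
    have hπr : ∀ i : Fin (r+1), π (i:ℕ) < r + 1 := by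
      intro i
      rcases Nat.eq_zero_or_pos (i:ℕ) with h | h
      · rw [h, hπ0]; omega
      · have := hπ (i:ℕ) h (Nat.lt_succ_iff.mp i.isLt)
        omega
    have hfinj : Function.Injective (fun i : Fin (r+1) => (⟨π (i:ℕ), hπr i⟩ : Fin (r+1))) := by
      intro i j hij
      have : π (i:ℕ) = π (j:ℕ) := congrArg Fin.val hij
      exact Fin.ext (π.injective this)
    set g : Equiv.Perm (Fin (r+1)) :=
      Equiv.ofBijective _ (Finite.injective_iff_bijective.mp hfinj) with hg
    have hgval : ∀ i : Fin (r+1), (g i : ℕ) = π (i:ℕ) := fun i => rfl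
    obtain ⟨l, hlp, hll, hls⟩ := star_decomp r g
    set L : ℝ := ((t:ℝ)-1)*(4*r*β*n) with hLdef
    have h4rw : 4*(r:ℝ)*β*n = (4*(r:ℝ))*w := by rw [hwdef]; ring
    have htW : (t:ℝ)*(4*(r:ℝ)*β*n) = L + (4*(r:ℝ))*w := by rw [hLdef, h4rw]; ring
    set cnt : Fin n → ℕ := fun v => blkCnt L w (((v:ℕ):ℝ)+1) l.length with hcnt
    have hzf' : ∀ z : Fin n, InBlock r β n t z → σ z ≠ 0 := by
      intro z hz h0
      exact hzf ⟨z, hz, h0⟩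
    have hllr : (l.length : ℝ) ≤ 2*(r:ℝ) := by exact_mod_cast hll
    refine ⟨fun v => ((l.take (cnt v)).prod ⟨σ v, hcol v⟩ : Fin (r+1)).val,
      ⟨fun v => Fin.is_le _, ?_⟩, ?_, ?_⟩
    · -- properness on edges
      have key : ∀ u v : Fin n, H.Adj u v → ((u:ℕ):ℝ) ≤ ((v:ℕ):ℝ) →
          ((l.take (cnt u)).prod ⟨σ u, hcol u⟩ : Fin (r+1)).val ≠
          ((l.take (cnt v)).prod ⟨σ v, hcol v⟩ : Fin (r+1)).val := by
        intro u v hadj hle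
        have hbnd := hbw u v hadj
        rw [abs_sub_le_iff] at hbnd
        have hxv : ((v:ℕ):ℝ) + 1 ≤ (((u:ℕ):ℝ) + 1) + w := by
          rw [hwdef]; linarith [hbnd.2]
        have hne := hσ.2 u v hadj
        have hmono : cnt u ≤ cnt v := blkCnt_mono L w l.length (by linarith)
        rcases eq_or_lt_of_le hmono with heq | hlt
        · -- same slice: same permutation applied
          rw [heq]
          intro hcon
          apply hne
          have h2 : (l.take (cnt v)).prod ⟨σ u, hcol u⟩ = (l.take (cnt v)).prod ⟨σ v, hcol v⟩ :=
            Fin.ext hcon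
          have h3 : (⟨σ u, hcol u⟩ : Fin (r+1)) = ⟨σ v, hcol v⟩ :=
            (l.take (cnt v)).prod.injective h2
          exact congrArg Fin.val h3
        · -- crossing a threshold
          obtain ⟨s, hslen, hsu, hsv, hceq⟩ := blk_cross L w (((u:ℕ):ℝ)+1) (((v:ℕ):ℝ)+1)
            l.length hw (by linarith) hxv hlt
          have hsR : (s:ℝ) + 1 ≤ 2*(r:ℝ) := by
            have : (s:ℝ) + 1 ≤ (l.length : ℝ) := by exact_mod_cast Nat.succ_le_of_lt hslen
            linarith
          have hs0 : (0:ℝ) ≤ (s:ℝ) := Nat.cast_nonneg s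
          -- both endpoints lie in block t
          have hut : InBlock r β n t u := by
            constructor
            · show ((t:ℝ)-1)*(4*r*β*n) < ((u:ℕ):ℝ) + 1
              rw [← hLdef]
              nlinarith
            · show ((u:ℕ):ℝ) + 1 ≤ (t:ℝ)*(4*r*β*n)
              rw [htW]
              nlinarith
          have hvt : InBlock r β n t v := by
            constructor
            · show ((t:ℝ)-1)*(4*r*β*n) < ((v:ℕ):ℝ) + 1
              rw [← hLdef]
              nlinarith
            · show ((v:ℕ):ℝ) + 1 ≤ (t:ℝ)*(4*r*β*n)
              rw [htW]
              nlinarith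
          have hu0 : σ u ≠ 0 := hzf' u hut
          have hv0 : σ v ≠ 0 := hzf' v hvt
          -- cnt v = cnt u + 1
          have hcu : cnt u < l.length := lt_of_lt_of_le hlt (blkCnt_le _ _ _ _)
          have htake : (l.take (cnt v)).prod = (l.take (cnt u)).prod * l.get ⟨cnt u, hcu⟩ := by
            rw [show cnt v = cnt u + 1 from hceq]
            exact List.prod_take_succ l (cnt u) hcu
          obtain ⟨c, hc⟩ := hls (l.get ⟨cnt u, hcu⟩) (l.get_mem _)
          rw [htake, hc]
          intro hcon
          have h2 : (l.take (cnt u)).prod ⟨σ u, hcol u⟩ =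
              (l.take (cnt u)).prod (Equiv.swap 0 c ⟨σ v, hcol v⟩) := by
            apply Fin.ext
            simpa [Equiv.Perm.mul_apply] using hcon
          have h3 : (⟨σ u, hcol u⟩ : Fin (r+1)) = Equiv.swap 0 c ⟨σ v, hcol v⟩ :=
            (l.take (cnt u)).prod.injective h2
          have ha0 : (⟨σ u, hcol u⟩ : Fin (r+1)) ≠ 0 := by
            intro h
            exact hu0 (congrArg Fin.val h)
          have hb0 : (⟨σ v, hcol v⟩ : Fin (r+1)) ≠ 0 := by
            intro h
            exact hv0 (congrArg Fin.val h)
          by_cases hbc : (⟨σ v, hcol v⟩ : Fin (r+1)) = c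
          · rw [hbc, Equiv.swap_apply_right] at h3
            exact ha0 h3
          · rw [Equiv.swap_apply_of_ne_of_ne hb0 hbc] at h3
            exact hne (congrArg Fin.val h3)
      intro u v hadj
      rcases le_total ((u:ℕ):ℝ) ((v:ℕ):ℝ) with h | h
      · exact key u v hadj h
      · exact (key v u hadj.symm h).symm
    · -- before block t: unchanged
      intro v i hit hib
      have hiW : (i:ℝ)*(4*r*β*n) ≤ L := by
        rw [hLdef]
        have : (i:ℝ) ≤ (t:ℝ) - 1 := by
          have : (i:ℝ) + 1 ≤ (t:ℝ) := by exact_mod_cast Nat.succ_le_of_lt hit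
          linarith
        nlinarith
      have hcz : cnt v = 0 := by
        apply blkCnt_eq_zero _ _ _ _ (le_of_lt hw)
        have := hib.2
        linarith
      simp [hcz]
    · -- after block t: permuted
      intro v i hti hib
      have hcl : cnt v = l.length := by
        apply blkCnt_eq_len
        intro s hs
        have hsR : (s:ℝ) + 1 ≤ 2*(r:ℝ) := by
          have : (s:ℝ) + 1 ≤ (l.length : ℝ) := by exact_mod_cast Nat.succ_le_of_lt hs
          linarith
        have h1 : (t:ℝ)*(4*r*β*n) ≤ ((i:ℝ)-1)*(4*r*β*n) := by
          have : (t:ℝ) ≤ (i:ℝ) - 1 := by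
            have : (t:ℝ) + 1 ≤ (i:ℝ) := by exact_mod_cast Nat.succ_le_of_lt hti
            linarith
          nlinarith
        have h2 := hib.1
        rw [htW] at h1
        nlinarith
      simp only [hcl, List.take_length, hlp]
      exact hgval _


end Paper
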